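/- arXiv:1610.07563 — 4 statements merged into one kernel-verified Lean document; each statement's English description precedes it below -/
import Mathlib

section
/- Let L : (Fin d → ℝ) → ℝ be any function, λ = 2√(μ₁μ₂) with μ₁, μ₂ > 0, and for each α define a_j(α) ≥ 0. Then α̂ minimizes G(α) = L(α) + λ ∑_j √(a_j(α)) if and only if (α̂, σ̂) minimizes H(α,σ) = L(α) + μ₁ ∑_j σ_j⁻¹ a_j(α) + μ₂ ∑_j σ_j over α and σ > 0, where σ̂_j = √(μ₁/μ₂) √(a_j(α̂)) (assuming a_j(α̂) > 0 for all j). -/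
lemma amgm_aux (μ₁ μ₂ x s : ℝ) (hμ₁ : 0 < μ₁) (hμ₂ : 0 < μ₂) (hx : 0 < x) (hs : 0 < s) :
    2 * Real.sqrt (μ₁ * μ₂) * Real.sqrt x ≤ μ₁ * (s⁻¹ * x) + μ₂ * s := by
  have h1 : Real.sqrt (μ₁ * μ₂) * Real.sqrt x = Real.sqrt (μ₁ * (s⁻¹ * x)) * Real.sqrt (μ₂ * s) := by
    rw [← Real.sqrt_mul (by positivity), ← Real.sqrt_mul (by positivity)]
    congr 1
    field_simp
  have h2 : Real.sqrt (μ₁ * (s⁻¹ * x)) ^ 2 = μ₁ * (s⁻¹ * x) := Real.sq_sqrt (by positivity)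
  have h3 : Real.sqrt (μ₂ * s) ^ 2 = μ₂ * s := Real.sq_sqrt (by positivity)
  nlinarith [sq_nonneg (Real.sqrt (μ₁ * (s⁻¹ * x)) - Real.sqrt (μ₂ * s))]

lemma eq_aux (μ₁ μ₂ x : ℝ) (hμ₁ : 0 < μ₁) (hμ₂ : 0 < μ₂) (hx : 0 < x) :
    μ₁ * ((Real.sqrt (μ₁ / μ₂) * Real.sqrt x)⁻¹ * x) + μ₂ * (Real.sqrt (μ₁ / μ₂) * Real.sqrt x)
      = 2 * Real.sqrt (μ₁ * μ₂) * Real.sqrt x := by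
  have h1 : Real.sqrt (μ₁ / μ₂) = Real.sqrt μ₁ / Real.sqrt μ₂ :=
    Real.sqrt_div hμ₁.le _
  have h2 : Real.sqrt (μ₁ * μ₂) = Real.sqrt μ₁ * Real.sqrt μ₂ :=
    Real.sqrt_mul hμ₁.le _
  have s1 : (0:ℝ) < Real.sqrt μ₁ := Real.sqrt_pos.2 hμ₁
  have s2 : (0:ℝ) < Real.sqrt μ₂ := Real.sqrt_pos.2 hμ₂
  have sx : (0:ℝ) < Real.sqrt x := Real.sqrt_pos.2 hx
  have e1 : Real.sqrt μ₁ ^ 2 = μ₁ := Real.sq_sqrt hμ₁.le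
  have e2 : Real.sqrt μ₂ ^ 2 = μ₂ := Real.sq_sqrt hμ₂.le
  have ex : Real.sqrt x ^ 2 = x := Real.sq_sqrt hx.le
  rw [h1, h2]
  field_simp
  linear_combination (μ₁*x - 2*μ₁*Real.sqrt x^2)*e2 + (μ₂*Real.sqrt x^2 - 2*Real.sqrt μ₂^2*Real.sqrt x^2)*e1 - (μ₁*μ₂)*ex

theorem stmt2 (d : ℕ) (hd : 0 < d) (L : (Fin d → ℝ) → ℝ)
    (a : (Fin d → ℝ) → Fin d → ℝ) (ha : ∀ α j, 0 < a α j)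
    (μ₁ μ₂ : ℝ) (hμ₁ : 0 < μ₁) (hμ₂ : 0 < μ₂) (lam : ℝ)
    (hlam : lam = 2 * Real.sqrt (μ₁ * μ₂)) (αhat : Fin d → ℝ) :
    (∀ α : Fin d → ℝ,
        L αhat + lam * ∑ j, Real.sqrt (a αhat j)
          ≤ L α + lam * ∑ j, Real.sqrt (a α j))
    ↔ (∀ (α : Fin d → ℝ) (σ : Fin d → ℝ), (∀ j, 0 < σ j) →
        L αhat + μ₁ * ∑ j, (Real.sqrt (μ₁ / μ₂) * Real.sqrt (a αhat j))⁻¹ * a αhat j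
            + μ₂ * ∑ j, Real.sqrt (μ₁ / μ₂) * Real.sqrt (a αhat j)
          ≤ L α + μ₁ * ∑ j, (σ j)⁻¹ * a α j + μ₂ * ∑ j, σ j) := by
  have hsum : ∀ β : Fin d → ℝ,
      μ₁ * ∑ j, (Real.sqrt (μ₁ / μ₂) * Real.sqrt (a β j))⁻¹ * a β j
        + μ₂ * ∑ j, Real.sqrt (μ₁ / μ₂) * Real.sqrt (a β j)
        = lam * ∑ j, Real.sqrt (a β j) := by
    intro β
    rw [hlam, Finset.mul_sum, Finset.mul_sum, Finset.mul_sum, ← Finset.sum_add_distrib]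
    refine Finset.sum_congr rfl fun j _ => ?_
    have := eq_aux μ₁ μ₂ (a β j) hμ₁ hμ₂ (ha β j)
    linear_combination this
  constructor
  · intro h α σ hσ
    have h1 : L αhat + μ₁ * ∑ j, (Real.sqrt (μ₁ / μ₂) * Real.sqrt (a αhat j))⁻¹ * a αhat j
        + μ₂ * ∑ j, Real.sqrt (μ₁ / μ₂) * Real.sqrt (a αhat j)
        = L αhat + lam * ∑ j, Real.sqrt (a αhat j) := by
      have := hsum αhat; linarith
    have h2 : lam * ∑ j, Real.sqrt (a α j)
        ≤ μ₁ * ∑ j, (σ j)⁻¹ * a α j + μ₂ * ∑ j, σ j := by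
      rw [hlam, Finset.mul_sum, Finset.mul_sum, Finset.mul_sum, ← Finset.sum_add_distrib]
      refine Finset.sum_le_sum fun j _ => ?_
      have := amgm_aux μ₁ μ₂ (a α j) (σ j) hμ₁ hμ₂ (ha α j) (hσ j)
      linarith [this, (mul_assoc μ₁ (σ j)⁻¹ (a α j)).symm]
    have h3 := h α
    linarith
  · intro h α
    have h1 := h α (fun j => Real.sqrt (μ₁ / μ₂) * Real.sqrt (a α j))
      (fun j => mul_pos (Real.sqrt_pos.2 (div_pos hμ₁ hμ₂)) (Real.sqrt_pos.2 (ha α j)))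
    have h2 := hsum αhat
    have h3 := hsum α
    linarith
end

section
/- Let L : ℝ^{d×T} → ℝ be arbitrary and p, k > 0. Define F(β, c) = L((c_j β_j^t)_{j,t}) + γ₁ ∑_{t,j} |β_j^t|^p + γ₂ ∑_j c_j^k over β ∈ ℝ^{d×T} and c ∈ ℝ^d with c_j ≥ 0, and define G(α) = L(α) + λ ∑_{j=1}^d (∑_{t=1}^T |α_j^t|^p)^{k/(p+k)} with λ = γ₁^{k/(p+k)} γ₂^{p/(p+k)} ((p/k)^{k/(p+k)} + (k/p)^{p/(p+k)}). Then inf over (β, c) of F equals inf over α of G. -/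
open Real

/-- two-variable weighted AM-GM -/
lemma amgm2 (θ τ a b : ℝ) (hθ : 0 ≤ θ) (hτ : 0 ≤ τ) (hsum : θ + τ = 1)
    (ha : 0 ≤ a) (hb : 0 ≤ b) : a ^ θ * b ^ τ ≤ θ * a + τ * b := by
  have := Real.geom_mean_le_arith_mean_weighted Finset.univ ![θ, τ] ![a, b]
    (by intro i _; fin_cases i <;> simpa) (by simp [Fin.sum_univ_two, hsum])
    (by intro i _; fin_cases i <;> simpa)
  simpa [Fin.sum_univ_two, Fin.prod_univ_two] using this

lemma rpow_split {x : ℝ} (hx : 0 < x) {a b : ℝ} (h : a + b = 1) :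
    x ^ a = x * (x ^ b)⁻¹ := by
  have : a = 1 + (-b) := by linarith
  rw [this, Real.rpow_add hx, Real.rpow_one, Real.rpow_neg hx.le]

/-- algebraic identity for lam -/
lemma lam_alt (p k γ₁ γ₂ : ℝ) (hp : 0 < p) (hk : 0 < k) (hγ₁ : 0 < γ₁) (hγ₂ : 0 < γ₂) :
    γ₁ ^ (k / (p + k)) * γ₂ ^ (p / (p + k))
      * ((p / k) ^ (k / (p + k)) + (k / p) ^ (p / (p + k)))
    = γ₁ ^ (k / (p + k)) * γ₂ ^ (p / (p + k))
      * ((p + k) * (k ^ (k / (p + k)))⁻¹ * (p ^ (p / (p + k)))⁻¹) := by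
  have hpk : 0 < p + k := by linarith
  set θ := k / (p + k) with hθ
  set τ := p / (p + k) with hτ
  have hsum : θ + τ = 1 := by rw [hθ, hτ, ← add_div, add_comm k p, div_self hpk.ne']
  have hsum' : τ + θ = 1 := by linarith
  have h1 : (p / k) ^ θ = p * (p ^ τ)⁻¹ * (k ^ θ)⁻¹ := by
    rw [Real.div_rpow hp.le hk.le, rpow_split hp hsum, div_eq_mul_inv]
  have h2 : (k / p) ^ τ = k * (k ^ θ)⁻¹ * (p ^ τ)⁻¹ := by
    rw [Real.div_rpow hk.le hp.le, rpow_split hk hsum', div_eq_mul_inv]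
  rw [h1, h2]; ring

lemma core_ineq (p k γ₁ γ₂ lam : ℝ) (hp : 0 < p) (hk : 0 < k) (hγ₁ : 0 < γ₁) (hγ₂ : 0 < γ₂)
    (hlam : lam = γ₁ ^ (k / (p + k)) * γ₂ ^ (p / (p + k))
        * ((p / k) ^ (k / (p + k)) + (k / p) ^ (p / (p + k))))
    (s c : ℝ) (hs : 0 ≤ s) (hc : 0 ≤ c) :
    lam * (c ^ p * s) ^ (k / (p + k)) ≤ γ₁ * s + γ₂ * c ^ k := by
  have hpk : 0 < p + k := by linarith
  have hlam' : lam = γ₁ ^ (k / (p + k)) * γ₂ ^ (p / (p + k))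
      * ((p + k) * (k ^ (k / (p + k)))⁻¹ * (p ^ (p / (p + k)))⁻¹) := by
    rw [hlam, lam_alt p k γ₁ γ₂ hp hk hγ₁ hγ₂]
  set θ := k / (p + k) with hθ
  set τ := p / (p + k) with hτ
  have hθ0 : 0 < θ := by positivity
  have hτ0 : 0 < τ := by positivity
  have hsum : θ + τ = 1 := by rw [hθ, hτ]; field_simp; ring
  have hlp : 0 < lam := by
    rw [hlam']; positivity
  rcases eq_or_lt_of_le hs with h | hs'
  · simp [← h, Real.zero_rpow hθ0.ne']
    positivity
  rcases eq_or_lt_of_le hc with h | hc'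
  · simp [← h, Real.zero_rpow hp.ne', Real.zero_rpow hk.ne', Real.zero_rpow hθ0.ne']
    positivity
  have hck : 0 < c ^ k := Real.rpow_pos_of_pos hc' k
  have key : (γ₁ * s / θ) ^ θ * (γ₂ * c ^ k / τ) ^ τ = lam * (c ^ p * s) ^ θ := by
    have e1 : (c ^ k) ^ τ = (c ^ p) ^ θ := by
      rw [← Real.rpow_mul hc'.le, ← Real.rpow_mul hc'.le]
      congr 1
      rw [hθ, hτ]; field_simp
    have eθ : θ ^ θ = k ^ θ / (p + k) ^ θ := Real.div_rpow hk.le hpk.le θ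
    have eτ : τ ^ τ = p ^ τ / (p + k) ^ τ := Real.div_rpow hp.le hpk.le τ
    have epk : (p + k) ^ θ * (p + k) ^ τ = p + k := by
      rw [← Real.rpow_add hpk, hsum, Real.rpow_one]
    rw [Real.div_rpow (by positivity) hθ0.le, Real.div_rpow (by positivity) hτ0.le,
      Real.mul_rpow hγ₁.le hs'.le, Real.mul_rpow hγ₂.le hck.le, e1,
      Real.mul_rpow (Real.rpow_pos_of_pos hc' p).le hs'.le, hlam', eθ, eτ]
    have hkθ : (0:ℝ) < k ^ θ := Real.rpow_pos_of_pos hk θ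
    have hpτ : (0:ℝ) < p ^ τ := Real.rpow_pos_of_pos hp τ
    have h1 : (0:ℝ) < (p + k) ^ θ := Real.rpow_pos_of_pos hpk θ
    have h2 : (0:ℝ) < (p + k) ^ τ := Real.rpow_pos_of_pos hpk τ
    field_simp
    linear_combination epk
  calc lam * (c ^ p * s) ^ θ = (γ₁ * s / θ) ^ θ * (γ₂ * c ^ k / τ) ^ τ := key.symm
    _ ≤ θ * (γ₁ * s / θ) + τ * (γ₂ * c ^ k / τ) :=
        amgm2 θ τ _ _ hθ0.le hτ0.le hsum (by positivity) (by positivity)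
    _ = γ₁ * s + γ₂ * c ^ k := by field_simp

lemma core_eq (p k γ₁ γ₂ lam : ℝ) (hp : 0 < p) (hk : 0 < k) (hγ₁ : 0 < γ₁) (hγ₂ : 0 < γ₂)
    (hlam : lam = γ₁ ^ (k / (p + k)) * γ₂ ^ (p / (p + k))
        * ((p / k) ^ (k / (p + k)) + (k / p) ^ (p / (p + k))))
    (s : ℝ) (hs : 0 < s) :
    ∃ c : ℝ, 0 < c ∧ γ₁ * (s / c ^ p) + γ₂ * c ^ k = lam * s ^ (k / (p + k)) := by
  have hpk : 0 < p + k := by linarith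
  have hlam' : lam = γ₁ ^ (k / (p + k)) * γ₂ ^ (p / (p + k))
      * ((p + k) * (k ^ (k / (p + k)))⁻¹ * (p ^ (p / (p + k)))⁻¹) := by
    rw [hlam, lam_alt p k γ₁ γ₂ hp hk hγ₁ hγ₂]
  set θ := k / (p + k) with hθ
  set τ := p / (p + k) with hτ
  have hθ0 : 0 < θ := by positivity
  have hτ0 : 0 < τ := by positivity
  have hsum : θ + τ = 1 := by rw [hθ, hτ]; field_simp; ring
  have hsum' : τ + θ = 1 := by linarith
  set A := γ₁ * p * s / (γ₂ * k) with hA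
  have hA0 : 0 < A := by positivity
  refine ⟨A ^ (1 / (p + k)), Real.rpow_pos_of_pos hA0 _, ?_⟩
  have hcp : (A ^ (1 / (p + k))) ^ p = A ^ τ := by
    rw [← Real.rpow_mul hA0.le]; congr 1; rw [hτ]; field_simp
  have hck : (A ^ (1 / (p + k))) ^ k = A ^ θ := by
    rw [← Real.rpow_mul hA0.le]; congr 1; rw [hθ]; field_simp
  rw [hcp, hck, hlam']
  have hAτ : A ^ τ = γ₁ ^ τ * p ^ τ * s ^ τ / (γ₂ ^ τ * k ^ τ) := by
    rw [hA, Real.div_rpow (by positivity) (by positivity),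
      Real.mul_rpow (by positivity) hs.le, Real.mul_rpow hγ₁.le hp.le,
      Real.mul_rpow hγ₂.le hk.le]
  have hAθ : A ^ θ = γ₁ ^ θ * p ^ θ * s ^ θ / (γ₂ ^ θ * k ^ θ) := by
    rw [hA, Real.div_rpow (by positivity) (by positivity),
      Real.mul_rpow (by positivity) hs.le, Real.mul_rpow hγ₁.le hp.le,
      Real.mul_rpow hγ₂.le hk.le]
  rw [hAτ, hAθ]
  have sγ₁ : γ₁ = γ₁ ^ θ * γ₁ ^ τ := by rw [← Real.rpow_add hγ₁, hsum, Real.rpow_one]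
  have sγ₂ : γ₂ = γ₂ ^ θ * γ₂ ^ τ := by rw [← Real.rpow_add hγ₂, hsum, Real.rpow_one]
  have ss : s = s ^ θ * s ^ τ := by rw [← Real.rpow_add hs, hsum, Real.rpow_one]
  have sp : p = p ^ θ * p ^ τ := by rw [← Real.rpow_add hp, hsum, Real.rpow_one]
  have sk : k = k ^ θ * k ^ τ := by rw [← Real.rpow_add hk, hsum, Real.rpow_one]
  have h1 : (0:ℝ) < γ₁ ^ τ := Real.rpow_pos_of_pos hγ₁ τ
  have h2 : (0:ℝ) < γ₂ ^ θ := Real.rpow_pos_of_pos hγ₂ θ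
  have h3 : (0:ℝ) < s ^ τ := Real.rpow_pos_of_pos hs τ
  have h4 : (0:ℝ) < p ^ τ := Real.rpow_pos_of_pos hp τ
  have h5 : (0:ℝ) < k ^ θ := Real.rpow_pos_of_pos hk θ
  have h6 : (0:ℝ) < γ₁ ^ θ := Real.rpow_pos_of_pos hγ₁ θ
  have h7 : (0:ℝ) < γ₂ ^ τ := Real.rpow_pos_of_pos hγ₂ τ
  have h8 : (0:ℝ) < s ^ θ := Real.rpow_pos_of_pos hs θ
  have h9 : (0:ℝ) < p ^ θ := Real.rpow_pos_of_pos hp θ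
  have h10 : (0:ℝ) < k ^ τ := Real.rpow_pos_of_pos hk τ
  field_simp
  linear_combination (s * γ₂ ^ θ * γ₂ ^ τ * k ^ θ * k ^ τ) * sγ₁
    + (γ₁ ^ θ * γ₁ ^ τ * γ₂ ^ θ * γ₂ ^ τ * k ^ θ * k ^ τ) * ss
    - (γ₁ ^ θ * γ₁ ^ τ * γ₂ ^ θ * γ₂ ^ τ * s ^ θ * s ^ τ) * (sp + sk)
    + (γ₁ ^ θ * γ₁ ^ τ * p ^ θ * p ^ τ * s ^ θ * s ^ τ) * sγ₂

theorem stmt11 (d T : ℕ) (hd : 0 < d) (hT : 0 < T)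
    (L : (Fin d → Fin T → ℝ) → ℝ) (p k : ℝ) (hp : 0 < p) (hk : 0 < k)
    (γ₁ γ₂ : ℝ) (hγ₁ : 0 < γ₁) (hγ₂ : 0 < γ₂) (lam : ℝ)
    (hlam : lam = γ₁ ^ (k / (p + k)) * γ₂ ^ (p / (p + k))
        * ((p / k) ^ (k / (p + k)) + (k / p) ^ (p / (p + k)))) :
    sInf {v : ℝ | ∃ (β : Fin d → Fin T → ℝ) (c : Fin d → ℝ), (∀ j, 0 ≤ c j) ∧
        v = L (fun j t => c j * β j t) + γ₁ * ∑ t, ∑ j, |β j t| ^ p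
            + γ₂ * ∑ j, c j ^ k}
      = sInf {v : ℝ | ∃ α : Fin d → Fin T → ℝ,
        v = L α + lam * ∑ j, (∑ t, |α j t| ^ p) ^ (k / (p + k))} := by
  have hpk : 0 < p + k := by linarith
  have hθ0 : 0 < k / (p + k) := by positivity
  set S₁ := {v : ℝ | ∃ (β : Fin d → Fin T → ℝ) (c : Fin d → ℝ), (∀ j, 0 ≤ c j) ∧
      v = L (fun j t => c j * β j t) + γ₁ * ∑ t, ∑ j, |β j t| ^ p
          + γ₂ * ∑ j, c j ^ k} with hS₁
  set S₂ := {v : ℝ | ∃ α : Fin d → Fin T → ℝ,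
      v = L α + lam * ∑ j, (∑ t, |α j t| ^ p) ^ (k / (p + k))} with hS₂
  have hne₂ : S₂.Nonempty := ⟨_, ⟨0, rfl⟩⟩
  -- S₂ ⊆ S₁ : every value of the joint problem is attained by the multiplicative one
  have h21 : S₂ ⊆ S₁ := by
    rintro v ⟨α, rfl⟩
    set s : Fin d → ℝ := fun j => ∑ t, |α j t| ^ p with hsdef
    have hs0 : ∀ j, 0 ≤ s j :=
      fun j => Finset.sum_nonneg fun t _ => Real.rpow_nonneg (abs_nonneg _) p
    have H : ∀ j, ∃ cj : ℝ, 0 ≤ cj ∧ ∃ βr : Fin T → ℝ,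
        (∀ t, cj * βr t = α j t) ∧
        γ₁ * (∑ t, |βr t| ^ p) + γ₂ * cj ^ k = lam * (s j) ^ (k / (p + k)) := by
      intro j
      by_cases hsj : s j = 0
      · have hz : ∀ t, α j t = 0 := by
          intro t
          have h0 := (Finset.sum_eq_zero_iff_of_nonneg
            (fun t _ => Real.rpow_nonneg (abs_nonneg (α j t)) p)).1 hsj t (Finset.mem_univ t)
          have := (Real.rpow_eq_zero (abs_nonneg (α j t)) hp.ne').1 h0
          exact abs_eq_zero.1 this
        refine ⟨0, le_refl 0, fun _ => 0, fun t => by simp [hz t], ?_⟩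
        simp [Real.zero_rpow hp.ne', Real.zero_rpow hk.ne', hsj,
          Real.zero_rpow hθ0.ne']
      · have hsj' : 0 < s j := lt_of_le_of_ne (hs0 j) (Ne.symm hsj)
        obtain ⟨cj, hcj, heq⟩ := core_eq p k γ₁ γ₂ lam hp hk hγ₁ hγ₂ hlam (s j) hsj'
        refine ⟨cj, hcj.le, fun t => α j t / cj, fun t => mul_div_cancel₀ _ hcj.ne', ?_⟩
        have hsum : (∑ t, |α j t / cj| ^ p) = s j / cj ^ p := by
          rw [hsdef, Finset.sum_div]
          refine Finset.sum_congr rfl fun t _ => ?_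
          rw [abs_div, abs_of_pos hcj, Real.div_rpow (abs_nonneg _) hcj.le]
        rw [hsum, heq]
    choose c hc βm hrow heq using H
    refine ⟨fun j => βm j, c, hc, ?_⟩
    have hα : (fun j t => c j * βm j t) = α := by
      funext j t; exact hrow j t
    rw [hα, Finset.sum_comm, add_assoc, Finset.mul_sum, Finset.mul_sum, Finset.mul_sum,
      ← Finset.sum_add_distrib]
    congr 1
    exact Finset.sum_congr rfl fun j _ => (heq j).symm
  -- every value of the multiplicative problem dominates some value of the joint problem
  have h12 : ∀ v ∈ S₁, ∃ w ∈ S₂, w ≤ v := by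
    rintro v ⟨β, c, hc, rfl⟩
    refine ⟨L (fun j t => c j * β j t)
        + lam * ∑ j, (∑ t, |c j * β j t| ^ p) ^ (k / (p + k)),
      ⟨fun j t => c j * β j t, rfl⟩, ?_⟩
    rw [add_assoc]
    refine (add_le_add_iff_left _).2 ?_
    have hrow : ∀ j, (∑ t, |c j * β j t| ^ p) = c j ^ p * ∑ t, |β j t| ^ p := by
      intro j
      rw [Finset.mul_sum]
      refine Finset.sum_congr rfl fun t _ => ?_
      rw [abs_mul, abs_of_nonneg (hc j), Real.mul_rpow (hc j) (abs_nonneg _)]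
    calc lam * ∑ j, (∑ t, |c j * β j t| ^ p) ^ (k / (p + k))
        = ∑ j, lam * ((c j) ^ p * ∑ t, |β j t| ^ p) ^ (k / (p + k)) := by
          rw [Finset.mul_sum]
          exact Finset.sum_congr rfl fun j _ => by rw [hrow j]
      _ ≤ ∑ j, (γ₁ * (∑ t, |β j t| ^ p) + γ₂ * (c j) ^ k) :=
          Finset.sum_le_sum fun j _ => core_ineq p k γ₁ γ₂ lam hp hk hγ₁ hγ₂ hlam _ _
            (Finset.sum_nonneg fun t _ => Real.rpow_nonneg (abs_nonneg _) p) (hc j)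
      _ = γ₁ * ∑ t, ∑ j, |β j t| ^ p + γ₂ * ∑ j, c j ^ k := by
          rw [Finset.sum_add_distrib, ← Finset.mul_sum, ← Finset.mul_sum, Finset.sum_comm]
  have hne₁ : S₁.Nonempty := hne₂.mono h21
  by_cases hb : BddBelow S₁
  · have hb₂ : BddBelow S₂ := hb.mono h21
    refine le_antisymm (csInf_le_csInf hb hne₂ h21) (le_csInf hne₁ fun v hv => ?_)
    obtain ⟨w, hw, hle⟩ := h12 v hv
    exact (csInf_le hb₂ hw).trans hle
  · have hb₂ : ¬ BddBelow S₂ := by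
      rintro ⟨b, hb'⟩
      exact hb ⟨b, fun v hv => by
        obtain ⟨w, hw, hle⟩ := h12 v hv
        exact (hb' hw).trans hle⟩
    rw [Real.sInf_of_not_bddBelow hb, Real.sInf_of_not_bddBelow hb₂]
end

section
/- With p = k = 1, for any matrix α ∈ ℝ^{d×T}, the infimum over c_j > 0 of γ₁ ∑_{j,t} |α_j^t|/c_j + γ₂ ∑_j c_j equals 2√(γ₁γ₂) ∑_{j=1}^d √(∑_{t=1}^T |α_j^t|). -/
private lemma eq_of_sq_eq_sq' {x y : ℝ} (hx : 0 ≤ x) (hy : 0 ≤ y) (h : x ^ 2 = y ^ 2) :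
    x = y := by
  calc x = Real.sqrt (x ^ 2) := (Real.sqrt_sq hx).symm
    _ = Real.sqrt (y ^ 2) := by rw [h]
    _ = y := Real.sqrt_sq hy

theorem stmt13 (d T : ℕ) (hd : 0 < d) (hT : 0 < T)
    (γ₁ γ₂ : ℝ) (hγ₁ : 0 < γ₁) (hγ₂ : 0 < γ₂) (α : Fin d → Fin T → ℝ) :
    sInf {v : ℝ | ∃ c : Fin d → ℝ, (∀ j, 0 < c j) ∧
        v = γ₁ * ∑ j, ∑ t, |α j t| / c j + γ₂ * ∑ j, c j}
      = 2 * Real.sqrt (γ₁ * γ₂) * ∑ j, Real.sqrt (∑ t, |α j t|) := by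
  set A : Fin d → ℝ := fun j => ∑ t, |α j t| with hA
  have hAnn : ∀ j, 0 ≤ A j := fun j => Finset.sum_nonneg fun t _ => abs_nonneg _
  set K : ℝ := Real.sqrt (γ₁ * γ₂)
  have hK2 : K ^ 2 = γ₁ * γ₂ := Real.sq_sqrt (by positivity)
  have hKpos : 0 < K := Real.sqrt_pos.mpr (by positivity)
  -- rewrite of any element of the set as a sum over j
  have hsplit : ∀ c : Fin d → ℝ,
      γ₁ * ∑ j, ∑ t, |α j t| / c j + γ₂ * ∑ j, c j
        = ∑ j, (γ₁ * (A j / c j) + γ₂ * c j) := by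
    intro c
    rw [Finset.sum_add_distrib, Finset.mul_sum, Finset.mul_sum]
    congr 1
    refine Finset.sum_congr rfl fun j _ => ?_
    rw [hA]
    rw [← Finset.sum_div]
  -- pointwise lower bound (AM-GM)
  have key : ∀ (a c : ℝ), 0 ≤ a → 0 < c →
      2 * K * Real.sqrt a ≤ γ₁ * (a / c) + γ₂ * c := by
    intro a c ha hc
    have hs1 : Real.sqrt (γ₁ * a) ^ 2 = γ₁ * a := Real.sq_sqrt (by positivity)
    have hs2 : Real.sqrt γ₂ ^ 2 = γ₂ := Real.sq_sqrt hγ₂.le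
    have hsa : Real.sqrt a ^ 2 = a := Real.sq_sqrt ha
    have hKeq : K * Real.sqrt a = Real.sqrt (γ₁ * a) * Real.sqrt γ₂ := by
      apply eq_of_sq_eq_sq' (by positivity) (by positivity)
      rw [mul_pow, mul_pow, hK2, hs1, hs2, hsa]; ring
    have hsq := sq_nonneg (Real.sqrt (γ₁ * a) - Real.sqrt γ₂ * c)
    have h2 : 2 * K * Real.sqrt a * c ≤ γ₁ * a + γ₂ * c ^ 2 := by
      nlinarith [hs1, hs2, hsq]
    have heq : γ₁ * (a / c) + γ₂ * c = (γ₁ * a + γ₂ * c ^ 2) / c := by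
      field_simp
    rw [heq, le_div_iff₀ hc]
    linarith
  have hlb : ∀ v ∈ {v : ℝ | ∃ c : Fin d → ℝ, (∀ j, 0 < c j) ∧
      v = γ₁ * ∑ j, ∑ t, |α j t| / c j + γ₂ * ∑ j, c j},
      2 * K * ∑ j, Real.sqrt (A j) ≤ v := by
    rintro v ⟨c, hc, rfl⟩
    rw [hsplit c, Finset.mul_sum]
    exact Finset.sum_le_sum fun j _ => key (A j) (c j) (hAnn j) (hc j)
  apply le_antisymm
  · -- sInf ≤ target + ε for all ε > 0
    apply le_of_forall_pos_le_add
    intro ε hε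
    have hdpos : (0:ℝ) < d := Nat.cast_pos.mpr hd
    set δ : ℝ := ε / (γ₂ * d) with hδ
    have hδpos : 0 < δ := by positivity
    set c : Fin d → ℝ := fun j => Real.sqrt (γ₁ * A j / γ₂) + δ with hc
    have hcpos : ∀ j, 0 < c j := fun j => by positivity
    have hmem : γ₁ * ∑ j, ∑ t, |α j t| / c j + γ₂ * ∑ j, c j ∈
        {v : ℝ | ∃ c : Fin d → ℝ, (∀ j, 0 < c j) ∧
          v = γ₁ * ∑ j, ∑ t, |α j t| / c j + γ₂ * ∑ j, c j} :=
      ⟨c, hcpos, rfl⟩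
    refine le_trans (csInf_le ⟨2 * K * ∑ j, Real.sqrt (A j), hlb⟩ hmem) ?_
    rw [hsplit c]
    have hpt : ∀ j, γ₁ * (A j / c j) + γ₂ * c j
        ≤ 2 * K * Real.sqrt (A j) + γ₂ * δ := by
      intro j
      set s : ℝ := Real.sqrt (γ₁ * A j / γ₂) with hs
      have hsnn : 0 ≤ s := Real.sqrt_nonneg _
      have hs2 : s ^ 2 = γ₁ * A j / γ₂ := Real.sq_sqrt (by positivity)
      have hsa : Real.sqrt (A j) ^ 2 = A j := Real.sq_sqrt (hAnn j)
      have hKs : K * Real.sqrt (A j) = γ₂ * s := by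
        apply eq_of_sq_eq_sq' (by positivity) (by positivity)
        rw [mul_pow, mul_pow, hK2, hsa, hs2]
        field_simp
      have hKss : K * Real.sqrt (A j) * s = γ₁ * A j := by
        apply eq_of_sq_eq_sq' (by positivity) (by positivity)
        rw [mul_pow, mul_pow, mul_pow, hK2, hsa, hs2]
        field_simp
      have hcj : c j = s + δ := rfl
      rw [hcj]
      have hcjpos : 0 < s + δ := by positivity
      have hKnn : 0 ≤ K * Real.sqrt (A j) := by positivity
      -- goal: γ₁ * (A j / (s+δ)) + γ₂ * (s+δ) ≤ 2K√A + γ₂δ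
      have hdiv : γ₁ * (A j / (s + δ)) ≤ 2 * K * Real.sqrt (A j) + γ₂ * δ - γ₂ * (s + δ) := by
        rw [mul_div_assoc' γ₁ (A j) (s + δ), div_le_iff₀ hcjpos]
        have hγ₂s2 : γ₂ * (s * s) = γ₁ * A j := by
          have : γ₂ * s ^ 2 = γ₁ * A j := by rw [hs2]; field_simp
          nlinarith [this]
        nlinarith [mul_nonneg hKnn hδpos.le, hKs, hKss]
      linarith
    calc ∑ j, (γ₁ * (A j / c j) + γ₂ * c j)
        ≤ ∑ j, (2 * K * Real.sqrt (A j) + γ₂ * δ) := Finset.sum_le_sum fun j _ => hpt j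
      _ = 2 * K * ∑ j, Real.sqrt (A j) + d * (γ₂ * δ) := by
          rw [Finset.sum_add_distrib, ← Finset.mul_sum, Finset.sum_const, Finset.card_univ,
            Fintype.card_fin, nsmul_eq_mul]
      _ = 2 * K * ∑ j, Real.sqrt (A j) + ε := by
          rw [hδ]; field_simp
      _ = 2 * Real.sqrt (γ₁ * γ₂) * (∑ j, Real.sqrt (∑ t, |α j t|)) + ε := rfl
  · exact le_csInf ⟨_, fun j => (1:ℝ), fun _ => one_pos, rfl⟩ hlb
end

section
/- Suppose (α̂, σ̂) minimizes H(α, σ) = L(α) + μ₁ ∑_j σ_j⁻¹ a_j(α) + μ₂ ∑_j σ_j over all α and σ > 0, where a_j(α) > 0. Then α̂ minimizes G(α) = L(α) + 2√(μ₁μ₂) ∑_j √(a_j(α)). -/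
private lemma amgm_term {μ₁ μ₂ σ b : ℝ} (hμ₁ : 0 < μ₁) (hμ₂ : 0 < μ₂)
    (hσ : 0 < σ) (hb : 0 < b) :
    2 * Real.sqrt (μ₁ * μ₂) * Real.sqrt b ≤ μ₁ * σ⁻¹ * b + μ₂ * σ := by
  have h1 : Real.sqrt (μ₁ * σ⁻¹ * b) * Real.sqrt (μ₂ * σ)
      = Real.sqrt (μ₁ * μ₂) * Real.sqrt b := by
    rw [← Real.sqrt_mul (by positivity), ← Real.sqrt_mul (by positivity)]
    congr 1
    field_simp
  have h2 : Real.sqrt (μ₁ * σ⁻¹ * b) ^ 2 = μ₁ * σ⁻¹ * b := Real.sq_sqrt (by positivity)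
  have h3 : Real.sqrt (μ₂ * σ) ^ 2 = μ₂ * σ := Real.sq_sqrt (by positivity)
  nlinarith [sq_nonneg (Real.sqrt (μ₁ * σ⁻¹ * b) - Real.sqrt (μ₂ * σ))]

private lemma eq_term {μ₁ μ₂ b : ℝ} (hμ₁ : 0 < μ₁) (hμ₂ : 0 < μ₂) (hb : 0 < b) :
    μ₁ * (Real.sqrt (μ₁ / μ₂) * Real.sqrt b)⁻¹ * b
      + μ₂ * (Real.sqrt (μ₁ / μ₂) * Real.sqrt b)
      = 2 * Real.sqrt (μ₁ * μ₂) * Real.sqrt b := by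
  have hsb : (0:ℝ) < Real.sqrt b := Real.sqrt_pos.2 hb
  have hsq : (0:ℝ) < Real.sqrt (μ₁ / μ₂) := Real.sqrt_pos.2 (by positivity)
  have h1 : Real.sqrt (μ₁ / μ₂) * Real.sqrt (μ₁ * μ₂) = μ₁ := by
    rw [← Real.sqrt_mul (by positivity)]
    rw [show μ₁ / μ₂ * (μ₁ * μ₂) = μ₁ ^ 2 by field_simp]
    exact Real.sqrt_sq hμ₁.le
  have h2 : Real.sqrt b * Real.sqrt b = b := Real.mul_self_sqrt hb.le
  have h3 : μ₂ * Real.sqrt (μ₁ / μ₂) = Real.sqrt (μ₁ * μ₂) := by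
    rw [show μ₁ / μ₂ = μ₁ * μ₂ / μ₂ ^ 2 by field_simp,
      Real.sqrt_div' _ (by positivity), Real.sqrt_sq hμ₂.le]
    field_simp
  have hμq : μ₁ * (Real.sqrt (μ₁ / μ₂))⁻¹ = Real.sqrt (μ₁ * μ₂) := by
    rw [mul_comm, inv_mul_eq_div, div_eq_iff hsq.ne']
    rw [mul_comm]
    exact h1.symm
  have hsinv : (Real.sqrt b)⁻¹ * b = Real.sqrt b := by
    rw [inv_mul_eq_div, div_eq_iff hsb.ne']
    exact h2.symm
  have hfin : μ₁ * (Real.sqrt (μ₁ / μ₂) * Real.sqrt b)⁻¹ * b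
      = Real.sqrt (μ₁ * μ₂) * Real.sqrt b := by
    rw [mul_inv]
    calc μ₁ * ((Real.sqrt (μ₁ / μ₂))⁻¹ * (Real.sqrt b)⁻¹) * b
        = (μ₁ * (Real.sqrt (μ₁ / μ₂))⁻¹) * ((Real.sqrt b)⁻¹ * b) := by ring
      _ = Real.sqrt (μ₁ * μ₂) * Real.sqrt b := by rw [hμq, hsinv]
  rw [hfin, ← mul_assoc, h3]
  ring

theorem stmt15 (X : Type*) (d : ℕ) (hd : 0 < d) (L : X → ℝ)
    (a : X → Fin d → ℝ) (ha : ∀ α j, 0 < a α j)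
    (μ₁ μ₂ : ℝ) (hμ₁ : 0 < μ₁) (hμ₂ : 0 < μ₂)
    (αhat : X) (σhat : Fin d → ℝ) (hσhat : ∀ j, 0 < σhat j)
    (hmin : ∀ (α : X) (σ : Fin d → ℝ), (∀ j, 0 < σ j) →
      L αhat + μ₁ * ∑ j, (σhat j)⁻¹ * a αhat j + μ₂ * ∑ j, σhat j
        ≤ L α + μ₁ * ∑ j, (σ j)⁻¹ * a α j + μ₂ * ∑ j, σ j) :
    ∀ α : X,
      L αhat + 2 * Real.sqrt (μ₁ * μ₂) * ∑ j, Real.sqrt (a αhat j)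
        ≤ L α + 2 * Real.sqrt (μ₁ * μ₂) * ∑ j, Real.sqrt (a α j) := by
  intro α
  set σstar : Fin d → ℝ := fun j => Real.sqrt (μ₁ / μ₂) * Real.sqrt (a α j) with hσs
  have hσspos : ∀ j, 0 < σstar j := fun j => by
    have := ha α j
    have h1 : (0:ℝ) < Real.sqrt (μ₁ / μ₂) := Real.sqrt_pos.2 (by positivity)
    have h2 : (0:ℝ) < Real.sqrt (a α j) := Real.sqrt_pos.2 this
    exact mul_pos h1 h2
  have expand : ∀ (β : X) (σ : Fin d → ℝ),
      μ₁ * ∑ j, (σ j)⁻¹ * a β j + μ₂ * ∑ j, σ j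
        = ∑ j, (μ₁ * (σ j)⁻¹ * a β j + μ₂ * σ j) := by
    intro β σ
    rw [Finset.mul_sum, Finset.mul_sum, ← Finset.sum_add_distrib]
    exact Finset.sum_congr rfl fun j _ => by ring
  have expand2 : ∀ β : X,
      2 * Real.sqrt (μ₁ * μ₂) * ∑ j, Real.sqrt (a β j)
        = ∑ j, 2 * Real.sqrt (μ₁ * μ₂) * Real.sqrt (a β j) := fun β =>
    Finset.mul_sum _ _ _
  have hG : ∑ j, 2 * Real.sqrt (μ₁ * μ₂) * Real.sqrt (a αhat j)
      ≤ ∑ j, (μ₁ * (σhat j)⁻¹ * a αhat j + μ₂ * σhat j) :=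
    Finset.sum_le_sum fun j _ => amgm_term hμ₁ hμ₂ (hσhat j) (ha αhat j)
  have hH : ∑ j, (μ₁ * (σstar j)⁻¹ * a α j + μ₂ * σstar j)
      = ∑ j, 2 * Real.sqrt (μ₁ * μ₂) * Real.sqrt (a α j) :=
    Finset.sum_congr rfl fun j _ => eq_term hμ₁ hμ₂ (ha α j)
  have hm := hmin α σstar hσspos
  linarith [expand αhat σhat, expand α σstar, expand2 αhat, expand2 α]
end
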